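/- Let μₙ := (λₙ + λₙ⁻¹)/2. Then ∑_{i=1}^{n−1} (λᵢ⁻¹ λₙ + λᵢ λₙ⁻¹) ≥ (n−1) · min(d^{2/(n−1)}, d^{−2/(n−1)}) · μₙ^{n/(n−1)}. -/

import Mathlib

set_option maxHeartbeats 1000000 in
/-- For positive reals `λ₁,…,λₙ` with `λᵢ ≤ λₙ` and `∏ λᵢ = d²` (`d > 0`, `n ≥ 2`), setting
`μₙ = (λₙ + λₙ⁻¹)/2`, one has
`∑_{i<n} (λᵢ⁻¹λₙ + λᵢλₙ⁻¹) ≥ (n−1) · min(d^{2/(n−1)}, d^{−2/(n−1)}) · μₙ^{n/(n−1)}`. -/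
theorem stmt9 (n : ℕ) (hn : 2 ≤ n) (lam : ℕ → ℝ) (d : ℝ) (hd : 0 < d)
    (hpos : ∀ i ∈ Finset.Icc 1 n, 0 < lam i)
    (hle : ∀ i ∈ Finset.Icc 1 n, lam i ≤ lam n)
    (hprod : ∏ i ∈ Finset.Icc 1 n, lam i = d ^ 2) :
    ∑ i ∈ Finset.Icc 1 (n - 1), ((lam i)⁻¹ * lam n + lam i * (lam n)⁻¹)
      ≥ ((n : ℝ) - 1) * min (d ^ (2 / ((n : ℝ) - 1))) (d ^ (-2 / ((n : ℝ) - 1)))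
          * ((lam n + (lam n)⁻¹) / 2) ^ ((n : ℝ) / ((n : ℝ) - 1)) := by
  obtain ⟨m, rfl⟩ : ∃ m, n = m + 1 := ⟨n - 1, by omega⟩
  have hm : 1 ≤ m := by omega
  have hmR : (0:ℝ) < m := by positivity
  set s : Finset ℕ := Finset.Icc 1 m with hs
  have hmem : ∀ i ∈ s, i ∈ Finset.Icc 1 (m + 1) := by
    intro i hi
    simp only [hs, Finset.mem_Icc] at hi ⊢
    omega
  set L := lam (m + 1) with hL
  have hnmem : (m + 1) ∈ Finset.Icc 1 (m + 1) := by simp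
  have hLpos : 0 < L := hpos _ hnmem
  set μ := (L + L⁻¹) / 2 with hμ
  have hμpos : 0 < μ := by positivity
  set a : ℕ → ℝ := fun i => (lam i)⁻¹ * L + lam i * L⁻¹ with ha
  have hapos : ∀ i ∈ s, 0 < a i := by
    intro i hi
    have := hpos i (hmem i hi)
    positivity
  -- split the product
  have hsplit : (∏ i ∈ s, lam i) * L = d ^ 2 := by
    rw [← hprod, hs, Finset.prod_Icc_succ_top (by omega : 1 ≤ m + 1)]
  have hPpos : 0 < ∏ i ∈ s, lam i := Finset.prod_pos fun i hi => hpos i (hmem i hi)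
  -- two lower bounds for the product of a
  have hcard : s.card = m := by simp [hs]
  have h1 : L ^ (m + 1) / d ^ 2 ≤ ∏ i ∈ s, a i := by
    have : ∏ i ∈ s, ((lam i)⁻¹ * L) ≤ ∏ i ∈ s, a i := by
      apply Finset.prod_le_prod
      · intro i hi; have := hpos i (hmem i hi); positivity
      · intro i hi; have := hpos i (hmem i hi)
        have : 0 ≤ lam i * L⁻¹ := by positivity
        simp [ha]; linarith
    calc L ^ (m + 1) / d ^ 2 = (∏ i ∈ s, lam i)⁻¹ * L ^ m := by
          rw [← hsplit]
          field_simp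
          ring
      _ = ∏ i ∈ s, ((lam i)⁻¹ * L) := by
          rw [Finset.prod_mul_distrib, Finset.prod_inv_distrib, Finset.prod_const, hcard]
      _ ≤ _ := this
  have h2 : d ^ 2 / L ^ (m + 1) ≤ ∏ i ∈ s, a i := by
    have : ∏ i ∈ s, (lam i * L⁻¹) ≤ ∏ i ∈ s, a i := by
      apply Finset.prod_le_prod
      · intro i hi; have := hpos i (hmem i hi); positivity
      · intro i hi; have := hpos i (hmem i hi)
        have : 0 ≤ (lam i)⁻¹ * L := by positivity
        simp [ha]; linarith
    calc d ^ 2 / L ^ (m + 1) = (∏ i ∈ s, lam i) * (L⁻¹) ^ m := by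
          rw [← hsplit]
          field_simp
          rw [pow_succ', mul_assoc, ← mul_pow, mul_one_div_cancel hLpos.ne', one_pow, mul_one]
      _ = ∏ i ∈ s, (lam i * L⁻¹) := by
          rw [Finset.prod_mul_distrib, Finset.prod_const, hcard]
      _ ≤ _ := this
  -- key product bound
  have hkey : min (d ^ 2) (d ^ 2)⁻¹ * μ ^ (m + 1) ≤ ∏ i ∈ s, a i := by
    rcases le_total L 1 with hL1 | hL1
    · -- μ ≤ L⁻¹
      have hμle : μ ≤ L⁻¹ := by
        have hLL : L ≤ L⁻¹ := by
          nlinarith [mul_inv_cancel₀ hLpos.ne', inv_pos.mpr hLpos]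
        rw [hμ, div_le_iff₀ (by norm_num : (0:ℝ) < 2)]
        linarith
      have hpow : μ ^ (m + 1) ≤ (L ^ (m + 1))⁻¹ := by
        rw [← inv_pow]
        exact pow_le_pow_left₀ hμpos.le hμle _
      calc min (d ^ 2) (d ^ 2)⁻¹ * μ ^ (m + 1) ≤ d ^ 2 * (L ^ (m + 1))⁻¹ := by
            apply mul_le_mul (min_le_left _ _) hpow (by positivity) (by positivity)
        _ = d ^ 2 / L ^ (m + 1) := by rw [div_eq_mul_inv]
        _ ≤ _ := h2
    · -- μ ≤ L
      have hμle : μ ≤ L := by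
        have hLL : L⁻¹ ≤ L := by
          nlinarith [mul_inv_cancel₀ hLpos.ne', inv_pos.mpr hLpos]
        rw [hμ, div_le_iff₀ (by norm_num : (0:ℝ) < 2)]
        linarith
      have hpow : μ ^ (m + 1) ≤ L ^ (m + 1) := pow_le_pow_left₀ hμpos.le hμle _
      calc min (d ^ 2) (d ^ 2)⁻¹ * μ ^ (m + 1) ≤ (d ^ 2)⁻¹ * L ^ (m + 1) := by
            apply mul_le_mul (min_le_right _ _) hpow (by positivity) (by positivity)
        _ = L ^ (m + 1) / d ^ 2 := by rw [div_eq_mul_inv, mul_comm]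
        _ ≤ _ := h1
  -- AM-GM
  have hamgm : (m : ℝ) * (∏ i ∈ s, a i) ^ ((m:ℝ)⁻¹) ≤ ∑ i ∈ s, a i := by
    have := Real.geom_mean_le_arith_mean_weighted s (fun _ => (m:ℝ)⁻¹) a
      (fun i _ => by positivity)
      (by rw [Finset.sum_const, hcard, nsmul_eq_mul, mul_inv_cancel₀ hmR.ne'])
      (fun i hi => (hapos i hi).le)
    rw [Real.finset_prod_rpow s a (fun i hi => (hapos i hi).le)] at this
    have h' := mul_le_mul_of_nonneg_left this hmR.le
    calc (m : ℝ) * (∏ i ∈ s, a i) ^ ((m:ℝ)⁻¹)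
        ≤ (m : ℝ) * ∑ i ∈ s, (fun _ : ℕ => (m:ℝ)⁻¹) i * a i := h'
      _ = ∑ i ∈ s, a i := by
          simp only []
          rw [← Finset.mul_sum, ← mul_assoc, mul_inv_cancel₀ hmR.ne', one_mul]
  -- rpow of key bound
  have hrpow : (min (d ^ 2) (d ^ 2)⁻¹ * μ ^ (m + 1)) ^ ((m:ℝ)⁻¹)
      ≤ (∏ i ∈ s, a i) ^ ((m:ℝ)⁻¹) :=
    Real.rpow_le_rpow (by positivity) hkey (by positivity)
  -- compute the rpow of the key quantity
  have hminpos : (0:ℝ) < min (d ^ 2) (d ^ 2)⁻¹ := by positivity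
  have hsplit_rpow : (min (d ^ 2) (d ^ 2)⁻¹ * μ ^ (m + 1)) ^ ((m:ℝ)⁻¹)
      = (min (d ^ 2) (d ^ 2)⁻¹) ^ ((m:ℝ)⁻¹) * μ ^ ((m + 1 : ℝ) / m) := by
    rw [Real.mul_rpow hminpos.le (by positivity)]
    congr 1
    rw [← Real.rpow_natCast μ (m + 1), ← Real.rpow_mul hμpos.le]
    congr 1
    push_cast
    ring
  have hmin_rpow : (min (d ^ 2) (d ^ 2)⁻¹) ^ ((m:ℝ)⁻¹)
      = min (d ^ (2 / (m:ℝ))) (d ^ (-2 / (m:ℝ))) := by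
    have e1 : (d ^ 2 : ℝ) ^ ((m:ℝ)⁻¹) = d ^ (2 / (m:ℝ)) := by
      rw [← Real.rpow_natCast d 2, ← Real.rpow_mul hd.le]
      congr 1
    have e2 : ((d ^ 2 : ℝ)⁻¹) ^ ((m:ℝ)⁻¹) = d ^ (-2 / (m:ℝ)) := by
      rw [← Real.rpow_natCast d 2, ← Real.rpow_neg hd.le, ← Real.rpow_mul hd.le]
      congr 1
    rcases le_total d 1 with hd1 | hd1
    · have hA : (d ^ 2 : ℝ) ≤ (d ^ 2)⁻¹ := by
        have : d ^ 2 ≤ 1 := by nlinarith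
        nlinarith [mul_inv_cancel₀ (pow_pos hd 2).ne', inv_pos.mpr (pow_pos hd 2)]
      have hB : d ^ (2 / (m:ℝ)) ≤ d ^ (-2 / (m:ℝ)) :=
        Real.rpow_le_rpow_of_exponent_ge hd hd1 (by
          have : (0:ℝ) < (m:ℝ) := hmR
          rw [div_le_div_iff₀ this this]; nlinarith)
      rw [min_eq_left hA, min_eq_left hB, e1]
    · have hA : (d ^ 2 : ℝ)⁻¹ ≤ d ^ 2 := by
        have h1' : (1:ℝ) ≤ d ^ 2 := by nlinarith
        nlinarith [mul_inv_cancel₀ (pow_pos hd 2).ne', inv_pos.mpr (pow_pos hd 2)]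
      have hB : d ^ (-2 / (m:ℝ)) ≤ d ^ (2 / (m:ℝ)) :=
        Real.rpow_le_rpow_of_exponent_le hd1 (by
          have : (0:ℝ) < (m:ℝ) := hmR
          rw [div_le_div_iff₀ this this]; nlinarith)
      rw [min_eq_right hA, min_eq_right hB, e2]
  -- put everything together
  have hsub : ((m:ℝ) + 1) - 1 = (m:ℝ) := by ring
  have hsimp : (m + 1) - 1 = m := by omega
  rw [ge_iff_le]
  push_cast
  rw [hsub]
  calc (m:ℝ) * min (d ^ (2 / (m:ℝ))) (d ^ (-2 / (m:ℝ))) * μ ^ (((m:ℝ) + 1) / (m:ℝ))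
      = (m:ℝ) * ((min (d ^ 2) (d ^ 2)⁻¹ * μ ^ (m + 1)) ^ ((m:ℝ)⁻¹)) := by
        rw [hsplit_rpow, hmin_rpow, mul_assoc]
    _ ≤ (m:ℝ) * (∏ i ∈ s, a i) ^ ((m:ℝ)⁻¹) := by
        apply mul_le_mul_of_nonneg_left hrpow hmR.le
    _ ≤ ∑ i ∈ s, a i := hamgm
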